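/- arXiv:0803.0755 — 4 statements merged into one kernel-verified Lean document; each statement's English description precedes it below -/
import Mathlib

section
/- Let q be a prime, T ⊆ {1,...,q} with |T| = m, and let t ∈ {0,1}^q be the indicator vector of T. For the q×q circulant matrix whose rows are t, σ(t), ..., σ^{q-1}(t) (where σ is the cyclic right-shift by one position), the number of indices i ∈ {2,...,q} such that the Hamming distance between row 1 and row i is strictly less than m is at most m(m-1). -/
/-- Circulant matrix from the indicator vector of `T ⊆ Fin q`: row `i` is
`σ^i(t)`, i.e. its `j`-th entry is `t (j - i)`.  The number of nonzero row
indices `i` such that the Hamming distance between row `0` and row `i` is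
strictly less than `m = |T|` is at most `m(m-1)`. -/
theorem stmt_0 (q m : ℕ) (hq : 0 < q) (T : Finset (Fin q)) (hT : T.card = m) :
    {i : Fin q | (i : ℕ) ≠ 0 ∧
      ({j : Fin q | (j ∈ T) ≠ ((j - i) ∈ T)} : Set (Fin q)).ncard < m}.ncard
      ≤ m * (m - 1) := by
  classical
  haveI : NeZero q := ⟨hq.ne'⟩
  have hsub : {i : Fin q | (i : ℕ) ≠ 0 ∧
      ({j : Fin q | (j ∈ T) ≠ ((j - i) ∈ T)} : Set (Fin q)).ncard < m} ⊆
      (fun p : Fin q × Fin q => p.1 - p.2) '' (T.offDiag : Set (Fin q × Fin q)) := by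
    rintro i ⟨hi0, hlt⟩
    have hi0' : i ≠ 0 := by
      intro h; apply hi0; simp [h]
    by_cases hex : ∃ j, j ∈ T ∧ j - i ∈ T
    · obtain ⟨j, hj, hji⟩ := hex
      refine ⟨(j, j - i), ?_, ?_⟩
      · simp only [Finset.coe_offDiag, Set.mem_setOf_eq]
        refine ⟨hj, hji, ?_⟩
        intro h
        apply hi0'
        have := sub_eq_self.mp h.symm
        exact this
      · simp
    · exfalso
      have hTsub : (T : Set (Fin q)) ⊆ {j : Fin q | (j ∈ T) ≠ ((j - i) ∈ T)} := by
        intro j hj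
        have hj' : j ∈ T := hj
        have hji : j - i ∉ T := fun h => hex ⟨j, hj', h⟩
        simp only [Set.mem_setOf_eq]
        simp [hj', hji]
      have hm : m ≤ ({j : Fin q | (j ∈ T) ≠ ((j - i) ∈ T)} : Set (Fin q)).ncard := by
        calc m = (T : Set (Fin q)).ncard := by simp [Set.ncard_coe_finset, hT]
        _ ≤ _ := Set.ncard_le_ncard hTsub (Set.toFinite _)
      omega
  calc {i : Fin q | (i : ℕ) ≠ 0 ∧
      ({j : Fin q | (j ∈ T) ≠ ((j - i) ∈ T)} : Set (Fin q)).ncard < m}.ncard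
      ≤ ((fun p : Fin q × Fin q => p.1 - p.2) ''
          (T.offDiag : Set (Fin q × Fin q))).ncard :=
        Set.ncard_le_ncard hsub (Set.toFinite _)
    _ ≤ (T.offDiag : Set (Fin q × Fin q)).ncard := Set.ncard_image_le (Set.toFinite _)
    _ = T.offDiag.card := Set.ncard_coe_finset _
    _ = m * (m - 1) := by
        rw [Finset.offDiag_card, hT]
        cases m with
        | zero => simp
        | succ n => simp [Nat.succ_mul, Nat.mul_succ]
end

section
/- Let p be a prime, 0 < r < p, and let v(f₁),...,v(f_m) ∈ {0,1}^{p²} be the graph indicator vectors of m distinct polynomials of degree at most r over Z_p. Let Φ be the p²×m matrix with columns v(f_i)/√p. If m < p/r + 1, then Φ satisfies (1-δ)‖z‖² ≤ ‖Φz‖² ≤ (1+δ)‖z‖² for all z ∈ R^m, where δ = (m-1)r/p < 1. -/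
open Finset in
/-- DeVore's deterministic construction: the matrix whose columns are the
normalized graph-indicator vectors `v(fᵢ)/√p` of `m` distinct polynomials of
degree at most `r` over `ZMod p` satisfies the RIP inequalities with constant
`δ = (m-1)r/p < 1`, provided `m < p/r + 1`. -/
theorem stmt_9 (p r m : ℕ) (hp : p.Prime) [NeZero p] (hr0 : 0 < r) (hrp : r < p)
    (hm : 0 < m) (hmp : (m : ℝ) < (p : ℝ) / r + 1)
    (f : Fin m → Polynomial (ZMod p)) (hinj : Function.Injective f)
    (hdeg : ∀ i, (f i).natDegree ≤ r)
    (Φ : Matrix (ZMod p × ZMod p) (Fin m) ℝ)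
    (hΦ : ∀ ab j, Φ ab j = (if ab.2 = (f j).eval ab.1 then 1 else 0) / Real.sqrt p) :
    ((m : ℝ) - 1) * r / p < 1 ∧
    ∀ z : Fin m → ℝ,
      (1 - ((m : ℝ) - 1) * r / p) * ∑ k, z k ^ 2 ≤ ∑ ab, (Φ.mulVec z ab) ^ 2 ∧
      ∑ ab, (Φ.mulVec z ab) ^ 2 ≤ (1 + ((m : ℝ) - 1) * r / p) * ∑ k, z k ^ 2 := by
  haveI : Fact p.Prime := ⟨hp⟩
  have hp0 : (0:ℝ) < p := by exact_mod_cast hp.pos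
  have hr0' : (0:ℝ) < r := by exact_mod_cast hr0
  have hm1 : (1:ℝ) ≤ m := by exact_mod_cast hm
  set N : Fin m → Fin m → ℕ :=
    fun i j => (univ.filter fun a : ZMod p => (f i).eval a = (f j).eval a).card with hN
  have hNii : ∀ i, N i i = p := by
    intro i
    simp [hN, ZMod.card]
  have hNle : ∀ i j, i ≠ j → N i j ≤ r := by
    intro i j hij
    have hq : f i - f j ≠ 0 := sub_ne_zero.mpr (fun h => hij (hinj h))
    have hsub : (univ.filter fun a : ZMod p => (f i).eval a = (f j).eval a)
        ⊆ (f i - f j).roots.toFinset := by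
      intro a ha
      simp only [mem_filter] at ha
      rw [Multiset.mem_toFinset, Polynomial.mem_roots hq]
      simp [Polynomial.IsRoot, sub_eq_zero, ha.2]
    calc N i j ≤ (f i - f j).roots.toFinset.card := Finset.card_le_card hsub
      _ ≤ Multiset.card (f i - f j).roots := Multiset.toFinset_card_le _
      _ ≤ (f i - f j).natDegree := (f i - f j).card_roots'
      _ ≤ r := le_trans (Polynomial.natDegree_sub_le _ _) (max_le (hdeg i) (hdeg j))
  have hinner : ∀ i j, ∑ ab : ZMod p × ZMod p, Φ ab i * Φ ab j = (N i j : ℝ) / p := by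
    intro i j
    have hsq : Real.sqrt p * Real.sqrt p = p := Real.mul_self_sqrt hp0.le
    have h1 : ∀ a b : ZMod p, Φ (a,b) i * Φ (a,b) j =
        (if b = (f i).eval a then (if b = (f j).eval a then (1:ℝ) else 0) else 0) / p := by
      intro a b
      rw [hΦ, hΦ]
      dsimp only
      rw [div_mul_div_comm, hsq]
      congr 1
      split_ifs <;> norm_num
    rw [Fintype.sum_prod_type]
    simp only [h1, ← Finset.sum_div]
    congr 1
    have h2 : ∀ a : ZMod p,
        (∑ b : ZMod p, (if b = (f i).eval a then (if b = (f j).eval a then (1:ℝ) else 0) else 0))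
        = (if (f i).eval a = (f j).eval a then (1:ℝ) else 0) := by
      intro a
      rw [Finset.sum_ite_eq' univ ((f i).eval a) (fun b => if b = (f j).eval a then (1:ℝ) else 0)]
      simp
    simp only [h2]
    rw [Finset.sum_boole]
  -- expansion of the quadratic form
  have hS : ∀ z : Fin m → ℝ, ∑ ab, (Φ.mulVec z ab) ^ 2
      = ∑ i, ∑ j, z i * z j * ((N i j : ℝ) / p) := by
    intro z
    have e1 : ∀ ab, (Φ.mulVec z ab) ^ 2 = ∑ i, ∑ j, (Φ ab i * z i) * (Φ ab j * z j) := by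
      intro ab
      rw [sq, Matrix.mulVec, dotProduct, Finset.sum_mul_sum]
    simp only [e1]
    rw [Finset.sum_comm]
    refine Finset.sum_congr rfl fun i _ => ?_
    rw [Finset.sum_comm]
    refine Finset.sum_congr rfl fun j _ => ?_
    rw [← hinner i j, Finset.mul_sum]
    exact Finset.sum_congr rfl fun ab _ => by ring
  have hA0 : ∀ z : Fin m → ℝ, (0:ℝ) ≤ ∑ k, z k ^ 2 :=
    fun z => Finset.sum_nonneg fun k _ => sq_nonneg _
  -- bound on the off-diagonal error term
  have key : ∀ z : Fin m → ℝ,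
      |∑ i, ∑ j ∈ univ.erase i, z i * z j * ((N i j : ℝ) / p)|
        ≤ ((m:ℝ) - 1) * r / p * ∑ k, z k ^ 2 := by
    intro z
    set A := ∑ k, z k ^ 2 with hA
    have hin : ∀ i : Fin m, ∑ j ∈ univ.erase i, (z i ^ 2 + z j ^ 2) / 2
        = (((m:ℝ) - 1) * z i ^ 2 + (A - z i ^ 2)) / 2 := by
      intro i
      rw [← Finset.sum_div]
      congr 1
      rw [Finset.sum_add_distrib, Finset.sum_const,
        Finset.card_erase_of_mem (mem_univ i), Finset.sum_erase_eq_sub (mem_univ i), ← hA]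
      congr 1
      rw [nsmul_eq_mul]
      congr 1
      simp only [card_univ, Fintype.card_fin]
      push_cast [Nat.cast_sub hm]
      ring
    calc |∑ i, ∑ j ∈ univ.erase i, z i * z j * ((N i j : ℝ) / p)|
        ≤ ∑ i, ∑ j ∈ univ.erase i, |z i * z j * ((N i j : ℝ) / p)| := by
          refine (Finset.abs_sum_le_sum_abs _ _).trans ?_
          exact Finset.sum_le_sum fun i _ => Finset.abs_sum_le_sum_abs _ _
      _ ≤ ∑ i, ∑ j ∈ univ.erase i, (z i ^ 2 + z j ^ 2) / 2 * ((r:ℝ) / p) := by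
          refine Finset.sum_le_sum fun i _ => Finset.sum_le_sum fun j hj => ?_
          have hji : j ≠ i := Finset.ne_of_mem_erase hj
          have hNb : (N i j : ℝ) ≤ r := by exact_mod_cast hNle i j hji.symm
          have hNnn : (0:ℝ) ≤ (N i j : ℝ) / p := by positivity
          rw [abs_mul, abs_mul]
          have h1 : |z i| * |z j| ≤ (z i ^ 2 + z j ^ 2) / 2 := by
            nlinarith [sq_nonneg (|z i| - |z j|), sq_abs (z i), sq_abs (z j)]
          have h2 : |(N i j : ℝ) / p| ≤ (r:ℝ) / p := by
            rw [abs_of_nonneg hNnn]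
            gcongr
          exact mul_le_mul h1 h2 (abs_nonneg _) (by positivity)
      _ = ((m:ℝ) - 1) * r / p * A := by
          simp only [← Finset.sum_mul, hin]
          rw [← Finset.sum_div, Finset.sum_add_distrib, ← Finset.mul_sum,
            Finset.sum_sub_distrib, Finset.sum_const, card_univ, Fintype.card_fin,
            nsmul_eq_mul, ← hA]
          ring
  -- split into diagonal and off-diagonal parts
  have hsplit : ∀ z : Fin m → ℝ, ∑ ab, (Φ.mulVec z ab) ^ 2
      = (∑ k, z k ^ 2) + ∑ i, ∑ j ∈ univ.erase i, z i * z j * ((N i j : ℝ) / p) := by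
    intro z
    rw [hS]
    calc ∑ i, ∑ j, z i * z j * ((N i j : ℝ) / p)
        = ∑ i, (z i ^ 2 + ∑ j ∈ univ.erase i, z i * z j * ((N i j : ℝ) / p)) := by
          refine Finset.sum_congr rfl fun i _ => ?_
          rw [← Finset.add_sum_erase univ _ (mem_univ i)]
          congr 1
          rw [hNii i, div_self (ne_of_gt hp0)]
          ring
      _ = _ := by rw [Finset.sum_add_distrib]
  refine ⟨?_, ?_⟩
  · rw [div_lt_one hp0]
    have h1 : (m:ℝ) - 1 < (p:ℝ) / r := by linarith
    calc ((m:ℝ) - 1) * r < ((p:ℝ) / r) * r := mul_lt_mul_of_pos_right h1 hr0'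
      _ = p := div_mul_cancel₀ _ (ne_of_gt hr0')
  · intro z
    have hk := key z
    rw [abs_le] at hk
    rw [hsplit z]
    constructor <;> nlinarith [hk.1, hk.2]
end

section
/- Let p be a prime, 0 < r < p, and s ≥ 1. Let Ψ₀ be a matrix with sp² rows whose columns are vertical stacks of s vectors, each of which is a graph indicator vector v(f) of some polynomial f ∈ P_r (so every column of Ψ₀ has exactly sp ones), and suppose that for any two distinct columns i ≠ j, the stacked vectors in positions i and j at each of the s levels come from distinct polynomials. Then Ψ = Ψ₀/√(sp) satisfies: for every set T of m < p/r + 1 column indices and all z ∈ R^m, (1-δ)‖z‖² ≤ ‖Ψ_T z‖² ≤ (1+δ)‖z‖² with δ = (m-1)r/p. -/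
set_option maxHeartbeats 1000000

open Finset Polynomial in
private lemma stmt_10_roots {K : Type*} [Field K] [Fintype K] [DecidableEq K]
    {f g : K[X]} {r : ℕ} (hfg : f ≠ g) (hf : f.natDegree ≤ r) (hg : g.natDegree ≤ r) :
    ((univ.filter fun a : K => f.eval a = g.eval a).card : ℝ) ≤ r := by
  have hne : f - g ≠ 0 := sub_ne_zero.mpr hfg
  have hsub : (univ.filter fun a : K => f.eval a = g.eval a) ⊆ (f - g).roots.toFinset := by
    intro a ha
    simp only [mem_filter, mem_univ, true_and] at ha
    simp [Multiset.mem_toFinset, mem_roots, hne, IsRoot, sub_eq_zero, ha]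
  have h1 : (univ.filter fun a : K => f.eval a = g.eval a).card ≤ r := by
    calc (univ.filter fun a : K => f.eval a = g.eval a).card
        ≤ (f - g).roots.toFinset.card := Finset.card_le_card hsub
      _ ≤ Multiset.card (f - g).roots := Multiset.toFinset_card_le _
      _ ≤ (f - g).natDegree := card_roots' _
      _ ≤ r := le_trans (natDegree_sub_le f g) (max_le hf hg)
  exact_mod_cast h1

open Finset in
/-- Block DeVore construction: `Ψ₀` has columns that are vertical stacks of `s`
graph-indicator vectors of polynomials of degree at most `r` over `ZMod p`,
with distinct polynomials in distinct columns at each of the `s` levels.  Then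
`Ψ = Ψ₀/√(sp)` satisfies the RIP inequalities with constant `δ = (m-1)r/p` for
every support `T` of size `m < p/r + 1`. -/
theorem stmt_10 (p r s M : ℕ) (hp : p.Prime) [NeZero p] (hr0 : 0 < r)
    (hrp : r < p) (hs : 1 ≤ s)
    (F : Fin s → Fin M → Polynomial (ZMod p))
    (hdeg : ∀ x j, (F x j).natDegree ≤ r)
    (hdist : ∀ x : Fin s, ∀ i j : Fin M, i ≠ j → F x i ≠ F x j)
    (Ψ : Matrix (Fin s × (ZMod p × ZMod p)) (Fin M) ℝ)
    (hΨ : ∀ x ab j, Ψ (x, ab) j =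
      (if ab.2 = (F x j).eval ab.1 then 1 else 0) / Real.sqrt (s * p)) :
    ∀ T : Finset (Fin M), ((T.card : ℝ) < (p : ℝ) / r + 1) →
      ∀ z : Fin M → ℝ, (∀ j, j ∉ T → z j = 0) →
        (1 - ((T.card : ℝ) - 1) * r / p) * ∑ k, z k ^ 2
            ≤ ∑ row, (Ψ.mulVec z row) ^ 2 ∧
        ∑ row, (Ψ.mulVec z row) ^ 2
            ≤ (1 + ((T.card : ℝ) - 1) * r / p) * ∑ k, z k ^ 2 := by
  haveI := Fact.mk hp
  intro T hT z hz
  have hppos : (0:ℝ) < p := by exact_mod_cast hp.pos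
  have hspos : (0:ℝ) < s := by exact_mod_cast hs
  have hsp : (0:ℝ) < (s:ℝ) * p := mul_pos hspos hppos
  have hsqrt : Real.sqrt ((s:ℝ) * p) * Real.sqrt ((s:ℝ) * p) = (s:ℝ) * p :=
    Real.mul_self_sqrt hsp.le
  set G : Fin M → Fin M → ℝ := fun i j => ∑ row, Ψ row i * Ψ row j with hG
  -- Gram matrix computation
  have hGram : ∀ i j, G i j =
      (∑ x : Fin s, ((univ.filter fun a : ZMod p =>
        (F x i).eval a = (F x j).eval a).card : ℝ)) / ((s:ℝ) * p) := by
    intro i j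
    rw [hG]; beta_reduce
    rw [Fintype.sum_prod_type]
    rw [Finset.sum_div]
    refine Finset.sum_congr rfl fun x _ => ?_
    have : ∀ ab : ZMod p × ZMod p, Ψ (x, ab) i * Ψ (x, ab) j =
        ((if ab.2 = (F x i).eval ab.1 then (1:ℝ) else 0) *
         (if ab.2 = (F x j).eval ab.1 then (1:ℝ) else 0)) / ((s:ℝ) * p) := by
      intro ab
      rw [hΨ, hΨ, div_mul_div_comm, hsqrt]
    simp only [this]
    rw [← Finset.sum_div]
    congr 1
    rw [Fintype.sum_prod_type]
    have hinner : ∀ a : ZMod p,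
        ∑ b : ZMod p, (if b = (F x i).eval a then (1:ℝ) else 0) *
          (if b = (F x j).eval a then (1:ℝ) else 0) =
        if (F x i).eval a = (F x j).eval a then 1 else 0 := by
      intro a
      have : ∀ b : ZMod p, (if b = (F x i).eval a then (1:ℝ) else 0) *
          (if b = (F x j).eval a then (1:ℝ) else 0) =
          if b = (F x i).eval a then (if (F x i).eval a = (F x j).eval a then (1:ℝ) else 0)
            else 0 := by
        intro b
        by_cases hb : b = (F x i).eval a <;> simp [hb]
      simp only [this]
      simp
    simp only [hinner]
    rw [Finset.sum_boole]
  have hGdiag : ∀ i, G i i = 1 := by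
    intro i
    rw [hGram]
    have : ∀ x : Fin s, ((univ.filter fun a : ZMod p =>
        (F x i).eval a = (F x i).eval a).card : ℝ) = p := by
      intro x
      simp [Finset.filter_true_of_mem, ZMod.card]
    rw [Finset.sum_congr rfl fun x _ => this x]
    simp [div_self hsp.ne']
  have hGoff : ∀ i j, i ≠ j → |G i j| ≤ (r:ℝ) / p := by
    intro i j hij
    rw [hGram]
    have h0 : (0:ℝ) ≤ ∑ x : Fin s, ((univ.filter fun a : ZMod p =>
        (F x i).eval a = (F x j).eval a).card : ℝ) :=
      Finset.sum_nonneg fun x _ => by positivity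
    rw [abs_div, abs_of_nonneg h0, abs_of_pos hsp]
    rw [div_le_div_iff₀ hsp hppos]
    calc (∑ x : Fin s, ((univ.filter fun a : ZMod p =>
          (F x i).eval a = (F x j).eval a).card : ℝ)) * p
        ≤ (∑ x : Fin s, (r:ℝ)) * p := by
          apply mul_le_mul_of_nonneg_right _ hppos.le
          exact Finset.sum_le_sum fun x _ =>
            stmt_10_roots (hdist x i j hij) (hdeg x i) (hdeg x j)
      _ = (r:ℝ) * ((s:ℝ) * p) := by simp [Finset.sum_const]; ring
  -- quadratic form identity
  have hquad : ∑ row, (Ψ.mulVec z row) ^ 2 = ∑ i, ∑ j, z i * z j * G i j := by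
    have h1 : ∀ row, (Ψ.mulVec z row) ^ 2 =
        ∑ i, ∑ j, z i * z j * (Ψ row i * Ψ row j) := by
      intro row
      simp only [Matrix.mulVec, dotProduct, sq]
      rw [Finset.sum_mul_sum]
      exact Finset.sum_congr rfl fun i _ => Finset.sum_congr rfl fun j _ => by ring
    simp only [h1]
    rw [Finset.sum_comm]
    refine Finset.sum_congr rfl fun i _ => ?_
    rw [Finset.sum_comm]
    refine Finset.sum_congr rfl fun j _ => ?_
    rw [hG, Finset.mul_sum]
  -- split into diagonal and off-diagonal
  set R : ℝ := ∑ i, ∑ j, if i = j then 0 else z i * z j * G i j with hR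
  have hsplit : ∑ row, (Ψ.mulVec z row) ^ 2 = (∑ k, z k ^ 2) + R := by
    rw [hquad, hR]
    have key : ∀ i, ∑ j, z i * z j * G i j =
        z i ^ 2 + ∑ j, if i = j then 0 else z i * z j * G i j := by
      intro i
      have h' : ∀ j, z i * z j * G i j =
          (if i = j then z i * z j * G i j else 0) +
          (if i = j then 0 else z i * z j * G i j) := by
        intro j; by_cases h : i = j <;> simp [h]
      calc ∑ j, z i * z j * G i j
          = ∑ j, ((if i = j then z i * z j * G i j else 0) +
              (if i = j then 0 else z i * z j * G i j)) :=
            Finset.sum_congr rfl fun j _ => h' j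
        _ = (∑ j, if i = j then z i * z j * G i j else 0) +
              ∑ j, (if i = j then 0 else z i * z j * G i j) := Finset.sum_add_distrib
        _ = z i ^ 2 + ∑ j, (if i = j then 0 else z i * z j * G i j) := by
            rw [Finset.sum_ite_eq]
            simp [hGdiag i, sq]
    rw [Finset.sum_congr rfl fun i _ => key i, Finset.sum_add_distrib]
  -- bound on R
  have hzsum : ∑ k, z k ^ 2 = ∑ k ∈ T, z k ^ 2 := by
    rw [← Finset.sum_subset (Finset.subset_univ T)]
    intro x _ hx; rw [hz x hx]; ring
  have habs : ∑ k, |z k| = ∑ k ∈ T, |z k| := by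
    rw [← Finset.sum_subset (Finset.subset_univ T)]
    intro x _ hx; rw [hz x hx]; simp
  have hznn : (0:ℝ) ≤ ∑ k, z k ^ 2 := Finset.sum_nonneg fun k _ => sq_nonneg _
  have hRbound : |R| ≤ ((T.card : ℝ) - 1) * r / p * ∑ k, z k ^ 2 := by
    have h1 : |R| ≤ ∑ i, ∑ j : Fin M,
        (r:ℝ)/p * (|z i| * |z j| - if i = j then z i ^ 2 else 0) := by
      refine (Finset.abs_sum_le_sum_abs _ _).trans ?_
      refine Finset.sum_le_sum fun i _ => ?_
      refine (Finset.abs_sum_le_sum_abs _ _).trans ?_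
      refine Finset.sum_le_sum fun j _ => ?_
      by_cases h : i = j
      · subst h; simp [abs_mul_abs_self, sq]
      · simp only [if_neg h, sub_zero, abs_mul]
        rw [mul_comm ((r:ℝ)/p)]
        exact mul_le_mul_of_nonneg_left (hGoff i j h) (by positivity)
    have h2 : ∑ i, ∑ j : Fin M,
        (r:ℝ)/p * (|z i| * |z j| - if i = j then z i ^ 2 else 0) =
        (r:ℝ)/p * ((∑ k, |z k|) ^ 2 - ∑ k, z k ^ 2) := by
      simp only [← Finset.mul_sum]
      congr 1
      simp only [Finset.sum_sub_distrib]
      congr 1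
      · rw [sq, Finset.sum_mul_sum]
      · refine Finset.sum_congr rfl fun i _ => ?_
        rw [Finset.sum_ite_eq]
        simp
    have h3 : (∑ k, |z k|) ^ 2 ≤ (T.card : ℝ) * ∑ k, z k ^ 2 := by
      rw [habs, hzsum]
      calc (∑ k ∈ T, |z k|) ^ 2 ≤ (T.card : ℝ) * ∑ k ∈ T, |z k| ^ 2 :=
            sq_sum_le_card_mul_sum_sq
        _ = (T.card : ℝ) * ∑ k ∈ T, z k ^ 2 := by simp [sq_abs]
    calc |R| ≤ (r:ℝ)/p * ((∑ k, |z k|) ^ 2 - ∑ k, z k ^ 2) := h1.trans_eq h2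
      _ ≤ (r:ℝ)/p * ((T.card : ℝ) * (∑ k, z k ^ 2) - ∑ k, z k ^ 2) := by
          apply mul_le_mul_of_nonneg_left _ (by positivity)
          linarith
      _ = ((T.card : ℝ) - 1) * r / p * ∑ k, z k ^ 2 := by ring
  have hRb := abs_le.mp hRbound
  constructor
  · rw [hsplit]; nlinarith [hRb.1]
  · rw [hsplit]; nlinarith [hRb.2]
end

section
/- Consider an n×N Toeplitz block matrix Φ whose (i,j) block (of size d×e) is Φ_{k+i-j}, built from independent blocks Φ_1,...,Φ_{k+l-1} of jointly independent random entries (l block-rows, k block-columns). Fix T ⊆ {1,...,N} with |T| = m and fix a row index i. Then the number of other rows of Φ_T that are stochastically dependent on row i (i.e., share at least one underlying random variable with row i, counted through the Toeplitz block structure) is at most min(m(m-1), l-1) when m(m-1) < l, and at most l-1 in general. -/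
/-- Dependency count for Toeplitz block matrices.  Rows of `Φ` are indexed by
`(r, a) ∈ Fin l × Fin d` (block-row `r`, row `a` inside the block), columns by
`(c, b) ∈ Fin k × Fin e`; the entry at row `(r, a)`, column `(c, b)` is the
`(a, b)` entry of the block `Φ_{k + r - c}`.  A row `(r', a')` is
stochastically dependent on the fixed row `(r, a)` iff it shares an underlying
random variable, that is, `a' = a` and there are columns `(c, b), (c', b) ∈ T`
with `r - c = r' - c'`.  The number of such rows is at most `m(m-1)` when
`m(m-1) < l`, and at most `l - 1` in general. -/
theorem stmt_14 (k l d e m : ℕ) (hl : 0 < l) (hd : 0 < d)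
    (T : Finset (Fin k × Fin e)) (hT : T.card = m)
    (r : Fin l) (a : Fin d) :
    (m * (m - 1) < l →
      {x : Fin l × Fin d | x ≠ (r, a) ∧ x.2 = a ∧
          ∃ cb ∈ T, ∃ cb' ∈ T, cb.2 = cb'.2 ∧
            (r : ℤ) - (cb.1 : ℤ) = (x.1 : ℤ) - (cb'.1 : ℤ)}.ncard
        ≤ min (m * (m - 1)) (l - 1)) ∧
    {x : Fin l × Fin d | x ≠ (r, a) ∧ x.2 = a ∧
        ∃ cb ∈ T, ∃ cb' ∈ T, cb.2 = cb'.2 ∧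
          (r : ℤ) - (cb.1 : ℤ) = (x.1 : ℤ) - (cb'.1 : ℤ)}.ncard
      ≤ l - 1 := by
  set S : Set (Fin l × Fin d) :=
    {x : Fin l × Fin d | x ≠ (r, a) ∧ x.2 = a ∧
        ∃ cb ∈ T, ∃ cb' ∈ T, cb.2 = cb'.2 ∧
          (r : ℤ) - (cb.1 : ℤ) = (x.1 : ℤ) - (cb'.1 : ℤ)} with hS
  -- Bound by l - 1 : project to the block-row index, which avoids r.
  have hl1 : S.ncard ≤ l - 1 := by
    have h1 : S.ncard ≤ ({r}ᶜ : Set (Fin l)).ncard := by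
      apply Set.ncard_le_ncard_of_injOn (fun x => x.1)
      · rintro ⟨x1, x2⟩ ⟨hne, ha, -⟩
        simp only [Set.mem_compl_iff, Set.mem_singleton_iff]
        rintro rfl
        simp only at ha
        exact hne (by rw [ha])
      · rintro ⟨x1, x2⟩ ⟨-, ha, -⟩ ⟨y1, y2⟩ ⟨-, hb, -⟩ h
        simp only at h ha hb
        simp [Prod.ext_iff, h, ha, hb]
    have h2 : ({r}ᶜ : Set (Fin l)).ncard = l - 1 := by
      rw [Set.ncard_eq_toFinset_card', Set.toFinset_compl, Finset.card_compl]
      simp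
    omega
  -- Bound by m*(m-1) : inject into off-diagonal pairs of T.
  have hm : S.ncard ≤ m * (m - 1) := by
    classical
    rcases S.eq_empty_or_nonempty with hE | ⟨x₀, hx₀⟩
    · simp [hE]
    obtain ⟨-, -, cb₀, hcb₀, -⟩ := hx₀
    have key : S.ncard ≤ (↑T.offDiag : Set ((Fin k × Fin e) × (Fin k × Fin e))).ncard := by
      apply Set.ncard_le_ncard_of_injOn (fun x =>
        if h : ∃ p : (Fin k × Fin e) × (Fin k × Fin e),
            p.1 ∈ T ∧ p.2 ∈ T ∧ p.1.2 = p.2.2 ∧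
            (r : ℤ) - (p.1.1 : ℤ) = (x.1 : ℤ) - (p.2.1 : ℤ)
          then h.choose else (cb₀, cb₀))
      · rintro ⟨x1, x2⟩ ⟨hne, ha, cb, hcb, cb', hcb', h1, h2⟩
        have h : ∃ p : (Fin k × Fin e) × (Fin k × Fin e),
            p.1 ∈ T ∧ p.2 ∈ T ∧ p.1.2 = p.2.2 ∧
            (r : ℤ) - (p.1.1 : ℤ) = ((x1, x2).1 : ℤ) - (p.2.1 : ℤ) :=
          ⟨(cb, cb'), hcb, hcb', h1, h2⟩
        simp only [dif_pos h]
        obtain ⟨hp1, hp2, hp3, hp4⟩ := h.choose_spec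
        dsimp only at hp4
        refine Finset.mem_coe.2 (Finset.mem_offDiag.2 ⟨hp1, hp2, ?_⟩)
        intro hpe
        rw [hpe] at hp4
        have hx1 : x1 = r := by
          have : (x1 : ℤ) = (r : ℤ) := by omega
          exact Fin.ext (by exact_mod_cast this)
        simp only at ha
        exact hne (by rw [hx1, ha])
      · rintro ⟨x1, x2⟩ ⟨-, ha, cb, hcb, cb', hcb', h1, h2⟩
          ⟨y1, y2⟩ ⟨-, hb, db, hdb, db', hdb', g1, g2⟩ hfe
        have hx : ∃ p : (Fin k × Fin e) × (Fin k × Fin e),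
            p.1 ∈ T ∧ p.2 ∈ T ∧ p.1.2 = p.2.2 ∧
            (r : ℤ) - (p.1.1 : ℤ) = ((x1, x2).1 : ℤ) - (p.2.1 : ℤ) :=
          ⟨(cb, cb'), hcb, hcb', h1, h2⟩
        have hy : ∃ p : (Fin k × Fin e) × (Fin k × Fin e),
            p.1 ∈ T ∧ p.2 ∈ T ∧ p.1.2 = p.2.2 ∧
            (r : ℤ) - (p.1.1 : ℤ) = ((y1, y2).1 : ℤ) - (p.2.1 : ℤ) :=
          ⟨(db, db'), hdb, hdb', g1, g2⟩
        simp only [dif_pos hx, dif_pos hy] at hfe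
        obtain ⟨-, -, -, hp4⟩ := hx.choose_spec
        obtain ⟨-, -, -, hq4⟩ := hy.choose_spec
        dsimp only at hp4 hq4
        rw [hfe] at hp4
        have hxy : x1 = y1 := by
          have : (x1 : ℤ) = (y1 : ℤ) := by omega
          exact Fin.ext (by exact_mod_cast this)
        simp only at ha hb
        simp [Prod.ext_iff, hxy, ha, hb]
    rw [Set.ncard_coe_finset, Finset.offDiag_card, hT] at key
    calc S.ncard ≤ m * m - m := key
      _ = m * (m - 1) := by
          cases m with
          | zero => simp
          | succ n => simp [Nat.succ_sub_one, Nat.mul_succ]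

  constructor
  · intro _
    exact le_min hm hl1
  · exact hl1
end
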